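/- Let D and H be Bott equivalent acyclic digraphs on n vertices. Then: (i) for every subset J ⊆ {0,1,…,n−1}, ρ_D(⋃_{j∈J} L_j(D)) = ρ_H(⋃_{j∈J} L_j(H)); (ii) for every j ∈ {0,1,…,n−2}, the 𝔽₂-rank of A_D[L_j(D), L_{j+1}(D)] equals the 𝔽₂-rank of A_H[L_j(H), L_{j+1}(H)]. -/

import Mathlib

/-- Local complementation at `v`: arc set `A(D) Δ (N⁻_D(v) × N⁺_D(v))`. -/
def localComp {V : Type*} (R : V → V → Prop) (v : V) : V → V → Prop :=
  fun x y => Xor' (R x y) (R x v ∧ R v y)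

/-- The slide on `uv`: arc set `A(D) Δ {(v,w) : w ∈ N⁺_D(u)}`. -/
def slideRel {V : Type*} (R : V → V → Prop) (u v : V) : V → V → Prop :=
  fun x y => Xor' (R x y) (x = v ∧ R u y)

/-- A digraph is acyclic if it has no directed cycle. -/
def AcyclicRel {V : Type*} (R : V → V → Prop) : Prop :=
  ∀ v : V, ¬ Relation.TransGen R v v

/-- One graph operation: a local complementation or a legal slide. -/
inductive GStep {V : Type*} : (V → V → Prop) → (V → V → Prop) → Prop
  | lc (R : V → V → Prop) (v : V) : GStep R (localComp R v)
  | sl (R : V → V → Prop) (u v : V) (h : u ≠ v) (hN : ∀ w, R w u ↔ R w v) :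
      GStep R (slideRel R u v)

/-- Bott equivalence of digraphs. -/
def BottEquivD {V : Type*} {W : Type*} (R : V → V → Prop) (S : W → W → Prop) : Prop :=
  ∃ R' : V → V → Prop, Relation.ReflTransGen GStep R R' ∧
    ∃ e : V ≃ W, ∀ a b : V, R' a b ↔ S (e a) (e b)

/-- There is a directed path with exactly `k` arcs ending at `v`. -/
def EndPath {V : Type*} (R : V → V → Prop) (k : ℕ) (v : V) : Prop :=
  ∃ f : Fin (k + 1) → V, Function.Injective f ∧ f (Fin.last k) = v ∧
    ∀ i : Fin k, R (f i.castSucc) (f i.succ)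

/-- The `k`-th level set `L_k(D)`. -/
def levelSet {V : Type*} (R : V → V → Prop) (k : ℕ) : Set V :=
  {v | EndPath R k v ∧ ∀ m : ℕ, k < m → ¬ EndPath R m v}

open Classical in
/-- The cut-rank `ρ_D(X)`: the `𝔽₂`-rank of the submatrix `A_D[X, V∖X]`
(rows indexed by `X`, columns outside `X`; entries at columns in `X` are set
to zero). -/
noncomputable def cutRank {V : Type*} [Fintype V] (R : V → V → Prop)
    (X : Set V) : ℕ :=
  Module.finrank (ZMod 2) ↥(Submodule.span (ZMod 2)
    {f : V → ZMod 2 | ∃ u ∈ X, f = fun y => if y ∉ X ∧ R u y then 1 else 0})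

open Classical in
/-- The `𝔽₂`-rank of the submatrix `A_D[X, Y]` (rows indexed by `X`, columns
by `Y`; entries at columns outside `Y` are set to zero). -/
noncomputable def subRank {V : Type*} [Fintype V] (R : V → V → Prop)
    (X Y : Set V) : ℕ :=
  Module.finrank (ZMod 2) ↥(Submodule.span (ZMod 2)
    {f : V → ZMod 2 | ∃ u ∈ X, f = fun y => if y ∈ Y ∧ R u y then 1 else 0})


/-! ### Auxiliary development -/

section LevelFunction

open Classical

variable {V : Type*} [Fintype V]

/-- The length of a longest directed path ending at `x`. -/
noncomputable def ell (R : V → V → Prop) (x : V) : ℕ := sSup {k | EndPath R k x}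

lemma endPath_zero (R : V → V → Prop) (x : V) : EndPath R 0 x :=
  ⟨fun _ => x, fun a b _ => Fin.ext (by omega), rfl, fun i => i.elim0⟩

lemma endPath_bdd (R : V → V → Prop) (x : V) : BddAbove {k | EndPath R k x} := by
  refine ⟨Fintype.card V, fun k hk => ?_⟩
  obtain ⟨f, hf, -, -⟩ := hk
  have := Fintype.card_le_of_injective f hf
  simp only [Fintype.card_fin] at this
  omega

lemma endPath_ell (R : V → V → Prop) (x : V) : EndPath R (ell R x) x :=
  Nat.sSup_mem ⟨0, endPath_zero R x⟩ (endPath_bdd R x)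

lemma le_ell {R : V → V → Prop} {k : ℕ} {x : V} (h : EndPath R k x) : k ≤ ell R x :=
  le_csSup (endPath_bdd R x) h

lemma levelSet_eq (R : V → V → Prop) (k : ℕ) :
    levelSet R k = {x | ell R x = k} := by
  ext x
  constructor
  · rintro ⟨h1, h2⟩
    have hk := le_ell h1
    by_contra hne
    have hlt : k < ell R x := lt_of_le_of_ne hk (fun hh => hne hh.symm)
    exact h2 _ hlt (endPath_ell R x)
  · intro hx
    refine ⟨hx ▸ endPath_ell R x, fun m hm hp => ?_⟩
    have := le_ell hp
    simp only [Set.mem_setOf_eq] at hx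
    omega

lemma path_transGen {R : V → V → Prop} {k : ℕ} {f : Fin (k + 1) → V}
    (hf : ∀ i : Fin k, R (f i.castSucc) (f i.succ)) :
    ∀ (j i : ℕ) (hj : j ≤ k) (hij : i < j),
      Relation.TransGen R (f ⟨i, by omega⟩) (f ⟨j, by omega⟩) := by
  intro j
  induction j with
  | zero => intro i hj hij; omega
  | succ j IH =>
    intro i hj hij
    have arc : R (f ⟨j, by omega⟩) (f ⟨j + 1, by omega⟩) := by
      have := hf ⟨j, by omega⟩
      simpa [Fin.castSucc_mk, Fin.succ_mk] using this
    rcases Nat.lt_or_ge i j with hlt | hge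
    · exact (IH i (by omega) hlt).tail arc
    · have : i = j := by omega
      subst this
      exact Relation.TransGen.single arc

lemma snoc_injective {n : ℕ} {f : Fin (n + 1) → V} {y : V}
    (hf : Function.Injective f) (hy : y ∉ Set.range f) :
    Function.Injective (Fin.snoc f y : Fin (n + 2) → V) := by
  intro a b hab
  rcases Fin.eq_castSucc_or_eq_last a with ⟨a', rfl⟩ | rfl <;>
    rcases Fin.eq_castSucc_or_eq_last b with ⟨b', rfl⟩ | rfl
  · rw [Fin.snoc_castSucc, Fin.snoc_castSucc] at hab
    exact congrArg _ (hf hab)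
  · rw [Fin.snoc_castSucc, Fin.snoc_last] at hab
    exact absurd ⟨a', hab⟩ hy
  · rw [Fin.snoc_castSucc, Fin.snoc_last] at hab
    exact absurd ⟨b', hab.symm⟩ hy
  · rfl

lemma ell_lt_of_arc {R : V → V → Prop} (hR : AcyclicRel R) {x y : V} (hxy : R x y) :
    ell R x < ell R y := by
  obtain ⟨f, hinj, hlast, harc⟩ := endPath_ell R x
  have hy : y ∉ Set.range f := by
    rintro ⟨i, rfl⟩
    rcases Fin.eq_castSucc_or_eq_last i with ⟨i', rfl⟩ | rfl
    · have htg : Relation.TransGen R (f i'.castSucc) (f (Fin.last (ell R x))) := by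
        have := path_transGen harc (ell R x) i'.1 le_rfl i'.2
        have e1 : (⟨i'.1, by omega⟩ : Fin (ell R x + 1)) = i'.castSucc := by
          apply Fin.ext; simp
        have e2 : (⟨ell R x, by omega⟩ : Fin (ell R x + 1)) = Fin.last (ell R x) := by
          apply Fin.ext; simp
        rwa [e1, e2] at this
      rw [hlast] at htg
      exact hR _ (Relation.TransGen.head hxy htg)
    · rw [hlast] at hxy
      exact hR _ (Relation.TransGen.single hxy)
  have hEnd : EndPath R (ell R x + 1) y := by
    refine ⟨Fin.snoc f y, snoc_injective hinj hy, Fin.snoc_last _ _, ?_⟩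
    intro i
    rcases Fin.eq_castSucc_or_eq_last i with ⟨i', rfl⟩ | rfl
    · rw [Fin.snoc_castSucc, Fin.succ_castSucc, Fin.snoc_castSucc]
      exact harc i'
    · rw [Fin.snoc_castSucc, Fin.succ_last, Fin.snoc_last, hlast]
      exact hxy
  have := le_ell hEnd
  omega

lemma exists_in {R : V → V → Prop} (hR : AcyclicRel R) {x : V} {k : ℕ}
    (hx : ell R x = k + 1) : ∃ y, R y x ∧ ell R y = k := by
  have h := endPath_ell R x
  rw [hx] at h
  obtain ⟨f, hinj, hlast, harc⟩ := h
  have harcl : R (f (Fin.last k).castSucc) x := by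
    have := harc (Fin.last k)
    rwa [Fin.succ_last, hlast] at this
  refine ⟨f (Fin.last k).castSucc, harcl, ?_⟩
  have h1 : EndPath R k (f (Fin.last k).castSucc) := by
    refine ⟨f ∘ Fin.castSucc, hinj.comp (Fin.castSucc_injective _), rfl, fun i => ?_⟩
    have := harc i.castSucc
    rw [Fin.succ_castSucc] at this
    exact this
  have h2 := le_ell h1
  have h3 := ell_lt_of_arc hR harcl
  omega

lemma acyclic_of_lt {R' : V → V → Prop} (m : V → ℕ)
    (h : ∀ a b, R' a b → m a < m b) : AcyclicRel R' := by
  intro v hv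
  have key : ∀ a b, Relation.TransGen R' a b → m a < m b := by
    intro a b hab
    induction hab with
    | single h' => exact h _ _ h'
    | tail _ h' ih => exact ih.trans (h _ _ h')
  exact absurd (key v v hv) (lt_irrefl _)

lemma ell_congr {R R' : V → V → Prop} (hR' : AcyclicRel R')
    (h1 : ∀ a b, R' a b → ell R a < ell R b)
    (h2 : ∀ x k, ell R x = k + 1 → ∃ y, R' y x ∧ ell R y = k) :
    ∀ x, ell R' x = ell R x := by
  suffices H : ∀ n x, ell R x = n → ell R' x = n by
    intro x; exact H _ x rfl
  intro n
  induction n using Nat.strong_induction_on with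
  | _ n IH =>
    intro x hx
    have hle : ell R' x ≤ n := by
      cases hm : ell R' x with
      | zero => omega
      | succ j =>
        obtain ⟨y, hyx, hy⟩ := exists_in hR' hm
        have hlt := h1 y x hyx
        rw [hx] at hlt
        have hy' : ell R' y = ell R y := IH _ hlt y rfl
        omega
    have hge : n ≤ ell R' x := by
      cases n with
      | zero => omega
      | succ k =>
        obtain ⟨y, hyx, hy⟩ := h2 x k hx
        have h5 : ell R' y = k := IH k (by omega) y hy
        have h6 := ell_lt_of_arc hR' hyx
        omega
    omega

lemma ell_eq_sameIn {R : V → V → Prop} (hR : AcyclicRel R) {u v : V}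
    (hN : ∀ w, R w u ↔ R w v) : ell R u = ell R v := by
  have H : ∀ a b : V, (∀ w, R w a ↔ R w b) → ell R a ≤ ell R b := by
    intro a b hab
    cases hk : ell R a with
    | zero => omega
    | succ k =>
      obtain ⟨y, hy, hyk⟩ := exists_in hR hk
      have := ell_lt_of_arc hR ((hab y).1 hy)
      omega
  exact le_antisymm (H u v hN) (H v u fun w => (hN w).symm)

lemma gstep_acyclic_ell {R R' : V → V → Prop} (hR : AcyclicRel R) (h : GStep R R') :
    AcyclicRel R' ∧ ∀ x, ell R' x = ell R x := by
  cases h with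
  | lc v =>
    have h1 : ∀ a b, localComp R v a b → ell R a < ell R b := by
      rintro a b (⟨hab, -⟩ | ⟨⟨hav, hvb⟩, -⟩)
      · exact ell_lt_of_arc hR hab
      · exact (ell_lt_of_arc hR hav).trans (ell_lt_of_arc hR hvb)
    have hac := acyclic_of_lt (ell R) h1
    refine ⟨hac, ell_congr hac h1 ?_⟩
    intro x k hx
    obtain ⟨y, hyx, hyk⟩ := exists_in hR hx
    refine ⟨y, Or.inl ⟨hyx, ?_⟩, hyk⟩
    rintro ⟨hyv, hvx⟩
    have t1 := ell_lt_of_arc hR hyv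
    have t2 := ell_lt_of_arc hR hvx
    omega
  | sl u v huv hN =>
    have heuv := ell_eq_sameIn hR hN
    have h1 : ∀ a b, slideRel R u v a b → ell R a < ell R b := by
      rintro a b (⟨hab, -⟩ | ⟨⟨rfl, hub⟩, -⟩)
      · exact ell_lt_of_arc hR hab
      · have := ell_lt_of_arc hR hub
        omega
    have hac := acyclic_of_lt (ell R) h1
    refine ⟨hac, ell_congr hac h1 ?_⟩
    intro x k hx
    obtain ⟨y, hyx, hyk⟩ := exists_in hR hx
    by_cases hc : y = v ∧ R u x
    · obtain ⟨rfl, hux⟩ := hc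
      exact ⟨u, Or.inl ⟨hux, fun hh => huv hh.1⟩, by omega⟩
    · exact ⟨y, Or.inl ⟨hyx, hc⟩, hyk⟩

end LevelFunction

section RankLemmas

open Classical

variable {V : Type*} [Fintype V]

open Classical in
/-- The row of `u` in the masked adjacency matrix `A[·, Y]`. -/
noncomputable def rowv (R : V → V → Prop) (Y : Set V) (u : V) : V → ZMod 2 :=
  fun y => if y ∈ Y ∧ R u y then 1 else 0

lemma subRank_eq (R : V → V → Prop) (X Y : Set V) :
    subRank R X Y = Module.finrank (ZMod 2)
      ↥(Submodule.span (ZMod 2) (rowv R Y '' X)) := by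
  have : {f : V → ZMod 2 | ∃ u ∈ X, f = fun y => if y ∈ Y ∧ R u y then 1 else 0}
      = rowv R Y '' X := by
    ext f
    simp only [Set.mem_setOf_eq, Set.mem_image, rowv, eq_comm]
    tauto
  rw [subRank, this]

lemma cutRank_eq (R : V → V → Prop) (X : Set V) : cutRank R X = subRank R X Xᶜ := by
  rw [subRank_eq]
  have hfun : ∀ u : V,
      (fun y => if y ∉ X ∧ R u y then (1 : ZMod 2) else 0) = rowv R Xᶜ u := by
    intro u; funext y
    by_cases h1 : y ∈ X <;> by_cases h2 : R u y <;> simp [rowv, h1, h2]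
  have hset : {f : V → ZMod 2 | ∃ u ∈ X, f = fun y => if y ∉ X ∧ R u y then 1 else 0}
      = rowv R Xᶜ '' X := by
    ext f
    constructor
    · rintro ⟨u, hu, rfl⟩; exact ⟨u, hu, (hfun u).symm⟩
    · rintro ⟨u, hu, rfl⟩; exact ⟨u, hu, (hfun u).symm⟩
  rw [cutRank, hset]

lemma zmod2_one_add_one : (1 : ZMod 2) + 1 = 0 := by decide

lemma span_eq_addSmul {ι M : Type*} [AddCommGroup M] [Module (ZMod 2) M]
    (X : Set ι) (g g' : ι → M) (c : M) (ε : ι → ZMod 2)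
    (hc : c ∈ Submodule.span (ZMod 2) (g '' X))
    (hc' : c ∈ Submodule.span (ZMod 2) (g' '' X))
    (h : ∀ u ∈ X, g' u = g u + ε u • c) :
    Submodule.span (ZMod 2) (g' '' X) = Submodule.span (ZMod 2) (g '' X) := by
  apply le_antisymm <;> rw [Submodule.span_le] <;> rintro f ⟨u, hu, rfl⟩
  · rw [h u hu]
    exact Submodule.add_mem _ (Submodule.subset_span ⟨u, hu, rfl⟩)
      (Submodule.smul_mem _ _ hc)
  · have hgu : g u = g' u - ε u • c := by rw [h u hu]; abel
    rw [hgu]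
    exact Submodule.sub_mem _ (Submodule.subset_span ⟨u, hu, rfl⟩)
      (Submodule.smul_mem _ _ hc')

/-- The column operation `f ↦ f + f v • b`, a linear map. -/
noncomputable def addProj (v : V) (b : V → ZMod 2) :
    (V → ZMod 2) →ₗ[ZMod 2] (V → ZMod 2) :=
  LinearMap.id + (LinearMap.proj v).smulRight b

lemma addProj_apply (v : V) (b : V → ZMod 2) (f : V → ZMod 2) :
    addProj v b f = f + f v • b := rfl

lemma addProj_invol (v : V) (b : V → ZMod 2) (hb : b v = 0) :
    (addProj v b).comp (addProj v b) = LinearMap.id := by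
  apply LinearMap.ext
  intro f
  funext y
  simp only [LinearMap.comp_apply, addProj_apply, LinearMap.id_apply, Pi.add_apply,
    Pi.smul_apply, smul_eq_mul, hb, mul_zero, add_zero]
  ring_nf
  have h2 : (2 : ZMod 2) = 0 := by decide
  rw [h2]
  ring

noncomputable def addProjEquiv (v : V) (b : V → ZMod 2) (hb : b v = 0) :
    (V → ZMod 2) ≃ₗ[ZMod 2] (V → ZMod 2) :=
  LinearEquiv.ofLinear (addProj v b) (addProj v b) (addProj_invol v b hb)
    (addProj_invol v b hb)

lemma finrank_span_image_equiv {M M' : Type*} [AddCommGroup M] [Module (ZMod 2) M]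
    [AddCommGroup M'] [Module (ZMod 2) M'] (e : M ≃ₗ[ZMod 2] M') (s : Set M) :
    Module.finrank (ZMod 2) ↥(Submodule.span (ZMod 2) (⇑e '' s))
      = Module.finrank (ZMod 2) ↥(Submodule.span (ZMod 2) s) := by
  have : ⇑e '' s = ⇑(e.toLinearMap) '' s := rfl
  rw [this, Submodule.span_image]
  exact LinearEquiv.finrank_map_eq e _

lemma subRank_localComp_cut {S : V → V → Prop} (hS : AcyclicRel S) (v : V) (X : Set V) :
    subRank (localComp S v) X Xᶜ = subRank S X Xᶜ := by
  have hvv : ¬ S v v := fun hh => hS v (Relation.TransGen.single hh)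
  rw [subRank_eq, subRank_eq]
  by_cases hv : v ∈ X
  · -- row operations
    have key : ∀ u, rowv (localComp S v) Xᶜ u
        = rowv S Xᶜ u + (if S u v then (1 : ZMod 2) else 0) • rowv S Xᶜ v := by
      intro u; funext y
      simp only [rowv, localComp, Pi.add_apply, Pi.smul_apply, smul_eq_mul]
      by_cases h1 : y ∈ Xᶜ <;> by_cases h2 : S u y <;> by_cases h3 : S u v <;>
        by_cases h4 : S v y <;> simp [Xor', h1, h2, h3, h4, zmod2_one_add_one]
    have g'v : rowv (localComp S v) Xᶜ v = rowv S Xᶜ v := by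
      rw [key v]
      simp [hvv]
    have c_mem : rowv S Xᶜ v ∈ Submodule.span (ZMod 2) (rowv S Xᶜ '' X) :=
      Submodule.subset_span ⟨v, hv, rfl⟩
    have c_mem' : rowv S Xᶜ v ∈ Submodule.span (ZMod 2) (rowv (localComp S v) Xᶜ '' X) := by
      rw [← g'v]
      exact Submodule.subset_span ⟨v, hv, rfl⟩
    rw [span_eq_addSmul X (rowv S Xᶜ) (rowv (localComp S v) Xᶜ) (rowv S Xᶜ v)
      (fun u => if S u v then 1 else 0) c_mem c_mem' (fun u _ => key u)]
  · -- column operations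
    have hv' : v ∈ Xᶜ := hv
    have hbv : rowv S Xᶜ v v = 0 := by simp [rowv, hvv]
    have key : ∀ u, rowv (localComp S v) Xᶜ u
        = addProjEquiv v (rowv S Xᶜ v) hbv (rowv S Xᶜ u) := by
      intro u
      have happ : addProjEquiv v (rowv S Xᶜ v) hbv (rowv S Xᶜ u)
          = rowv S Xᶜ u + rowv S Xᶜ u v • rowv S Xᶜ v := rfl
      rw [happ]
      funext y
      simp only [rowv, localComp, Pi.add_apply, Pi.smul_apply, smul_eq_mul]
      by_cases h1 : y ∈ Xᶜ <;> by_cases h2 : S u y <;> by_cases h3 : S u v <;>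
        by_cases h4 : S v y <;> simp [Xor', h1, h2, h3, h4, hv', zmod2_one_add_one]
    have himg : rowv (localComp S v) Xᶜ '' X
        = ⇑(addProjEquiv v (rowv S Xᶜ v) hbv) '' (rowv S Xᶜ '' X) := by
      rw [← Set.image_comp]
      exact Set.image_congr fun u _ => key u
    rw [himg, finrank_span_image_equiv]

lemma subRank_slide {S : V → V → Prop} {u v : V} (huv : u ≠ v) (X Y : Set V)
    (hX : v ∈ X → u ∈ X) :
    subRank (slideRel S u v) X Y = subRank S X Y := by
  rw [subRank_eq, subRank_eq]
  have hrow : ∀ x, x ≠ v → rowv (slideRel S u v) Y x = rowv S Y x := by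
    intro x hx; funext y
    simp only [rowv, slideRel]
    by_cases h1 : y ∈ Y <;> by_cases h2 : S x y <;> simp [Xor', h1, h2, hx]
  by_cases hv : v ∈ X
  · have hu := hX hv
    have hvrow : rowv (slideRel S u v) Y v = rowv S Y v + rowv S Y u := by
      funext y
      simp only [rowv, slideRel, Pi.add_apply]
      by_cases h1 : y ∈ Y <;> by_cases h2 : S v y <;> by_cases h3 : S u y <;>
        simp [Xor', h1, h2, h3, zmod2_one_add_one]
    have key : ∀ x ∈ X, rowv (slideRel S u v) Y x
        = rowv S Y x + (if x = v then (1 : ZMod 2) else 0) • rowv S Y u := by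
      intro x _
      by_cases hxv : x = v
      · subst hxv; rw [hvrow]; simp
      · rw [hrow x hxv]; simp [hxv]
    have c_mem : rowv S Y u ∈ Submodule.span (ZMod 2) (rowv S Y '' X) :=
      Submodule.subset_span ⟨u, hu, rfl⟩
    have c_mem' : rowv S Y u ∈ Submodule.span (ZMod 2) (rowv (slideRel S u v) Y '' X) := by
      rw [← hrow u huv]
      exact Submodule.subset_span ⟨u, hu, rfl⟩
    rw [span_eq_addSmul X (rowv S Y) (rowv (slideRel S u v) Y) (rowv S Y u)
      (fun x => if x = v then 1 else 0) c_mem c_mem' key]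
  · have : rowv (slideRel S u v) Y '' X = rowv S Y '' X :=
      Set.image_congr fun x hx => hrow x (fun hh => hv (hh ▸ hx))
    rw [this]

lemma subRank_localComp_level {S : V → V → Prop} (hS : AcyclicRel S) (v : V) (j : ℕ) :
    subRank (localComp S v) {x | ell S x = j} {x | ell S x = j + 1}
      = subRank S {x | ell S x = j} {x | ell S x = j + 1} := by
  rw [subRank_eq, subRank_eq]
  have himg : rowv (localComp S v) {x | ell S x = j + 1} '' {x | ell S x = j}
      = rowv S {x | ell S x = j + 1} '' {x | ell S x = j} := by
    apply Set.image_congr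
    intro x hx
    funext y
    simp only [rowv, localComp]
    by_cases hy : y ∈ {y | ell S y = j + 1}
    · have hno : ¬ (S x v ∧ S v y) := by
        rintro ⟨hxv, hvy⟩
        have t1 := ell_lt_of_arc hS hxv
        have t2 := ell_lt_of_arc hS hvy
        simp only [Set.mem_setOf_eq] at hx hy
        omega
      simp [Xor', Xor, hy, hno]
    · simp [hy]
  rw [himg]

lemma gstep_invariant {S S' : V → V → Prop} (hS : AcyclicRel S) (h : GStep S S') :
    AcyclicRel S' ∧ (∀ x, ell S' x = ell S x) ∧
    (∀ X : Set V, (∀ a b, a ∈ X → ell S a = ell S b → b ∈ X) →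
      subRank S' X Xᶜ = subRank S X Xᶜ) ∧
    (∀ j : ℕ, subRank S' {x | ell S x = j} {x | ell S x = j + 1}
      = subRank S {x | ell S x = j} {x | ell S x = j + 1}) := by
  obtain ⟨hac, hell⟩ := gstep_acyclic_ell hS h
  refine ⟨hac, hell, ?_, ?_⟩
  · intro X hX
    cases h with
    | lc v => exact subRank_localComp_cut hS v X
    | sl u v huv hN =>
      exact subRank_slide huv X Xᶜ
        (fun hv => hX v u hv (ell_eq_sameIn hS hN).symm)
  · intro j
    cases h with
    | lc v => exact subRank_localComp_level hS v j
    | sl u v huv hN =>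
      refine subRank_slide huv _ _ (fun hv => ?_)
      have := ell_eq_sameIn hS hN
      simp only [Set.mem_setOf_eq] at hv ⊢
      omega

lemma chain_invariant {R R' : V → V → Prop} (hR : AcyclicRel R)
    (h : Relation.ReflTransGen GStep R R') :
    AcyclicRel R' ∧ (∀ x, ell R' x = ell R x) ∧
    (∀ X : Set V, (∀ a b, a ∈ X → ell R a = ell R b → b ∈ X) →
      subRank R' X Xᶜ = subRank R X Xᶜ) ∧
    (∀ j : ℕ, subRank R' {x | ell R x = j} {x | ell R x = j + 1}
      = subRank R {x | ell R x = j} {x | ell R x = j + 1}) := by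
  induction h with
  | refl => exact ⟨hR, fun _ => rfl, fun _ _ => rfl, fun _ => rfl⟩
  | @tail S1 S2 hsteps hstep ih =>
    obtain ⟨hac1, hell1, hcut1, hlev1⟩ := ih
    obtain ⟨hac2, hell2, hcut2, hlev2⟩ := gstep_invariant hac1 hstep
    refine ⟨hac2, fun x => (hell2 x).trans (hell1 x), ?_, ?_⟩
    · intro X hX
      rw [hcut2 X (fun a b ha hab => hX a b ha (by rw [← hell1 a, ← hell1 b]; exact hab))]
      exact hcut1 X hX
    · intro j
      have hset : ∀ m : ℕ, {x : V | ell R x = m} = {x : V | ell S1 x = m} :=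
        fun m => Set.ext fun x => by rw [Set.mem_setOf_eq, Set.mem_setOf_eq, hell1 x]
      rw [hset j, hset (j + 1), hlev2 j, ← hset j, ← hset (j + 1)]
      exact hlev1 j

end RankLemmas

section IsoTransport

open Classical

variable {V W : Type*} [Fintype V] [Fintype W]

lemma endPath_iso (e : V ≃ W) {S : W → W → Prop} {R : V → V → Prop}
    (he : ∀ a b, R a b ↔ S (e a) (e b)) (k : ℕ) (x : V) :
    EndPath R k x ↔ EndPath S k (e x) := by
  constructor
  · rintro ⟨f, hinj, hlast, harc⟩
    exact ⟨e ∘ f, e.injective.comp hinj, by simp [hlast], fun i => (he _ _).1 (harc i)⟩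
  · rintro ⟨g, hinj, hlast, harc⟩
    refine ⟨e.symm ∘ g, e.symm.injective.comp hinj, by simp [hlast], fun i => ?_⟩
    rw [he]
    simpa using harc i

lemma ell_iso (e : V ≃ W) {S : W → W → Prop} {R : V → V → Prop}
    (he : ∀ a b, R a b ↔ S (e a) (e b)) (x : V) :
    ell S (e x) = ell R x := by
  unfold ell
  congr 1
  ext k
  exact (endPath_iso e he k x).symm

lemma levelSet_iso (e : V ≃ W) {S : W → W → Prop} {R : V → V → Prop}
    (he : ∀ a b, R a b ↔ S (e a) (e b)) (j : ℕ) :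
    levelSet S j = ⇑e '' levelSet R j := by
  rw [levelSet_eq, levelSet_eq]
  ext w
  simp only [Set.mem_image, Set.mem_setOf_eq]
  constructor
  · intro hw
    refine ⟨e.symm w, ?_, by simp⟩
    rw [← ell_iso e he (e.symm w)]
    simpa using hw
  · rintro ⟨x, hx, rfl⟩
    rw [ell_iso e he]
    exact hx

noncomputable def funEquiv (e : V ≃ W) : (V → ZMod 2) ≃ₗ[ZMod 2] (W → ZMod 2) where
  toFun := fun f => f ∘ e.symm
  invFun := fun g => g ∘ e
  map_add' := fun _ _ => rfl
  map_smul' := fun _ _ => rfl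
  left_inv := fun f => by funext x; simp
  right_inv := fun g => by funext w; simp

lemma subRank_iso (e : V ≃ W) {S : W → W → Prop} {R : V → V → Prop}
    (he : ∀ a b, R a b ↔ S (e a) (e b)) (X Y : Set V) :
    subRank S (⇑e '' X) (⇑e '' Y) = subRank R X Y := by
  rw [subRank_eq, subRank_eq]
  have himg : rowv S (⇑e '' Y) '' (⇑e '' X) = ⇑(funEquiv e) '' (rowv R Y '' X) := by
    rw [← Set.image_comp, ← Set.image_comp]
    apply Set.image_congr
    intro x _
    funext w
    show (if w ∈ ⇑e '' Y ∧ S (e x) w then (1 : ZMod 2) else 0)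
      = rowv R Y x (e.symm w)
    have h1 : (w ∈ ⇑e '' Y) ↔ e.symm w ∈ Y := by
      constructor
      · rintro ⟨y, hy, rfl⟩; simpa using hy
      · intro hy; exact ⟨e.symm w, hy, by simp⟩
    have h2 : S (e x) w ↔ R x (e.symm w) := by
      rw [he]; simp
    rw [rowv]
    exact if_congr (and_congr h1 h2) rfl rfl
  rw [himg, finrank_span_image_equiv]

end IsoTransport

set_option maxHeartbeats 1000000 in
/-- For Bott equivalent acyclic digraphs on `n` vertices: (i) the cut-rank of
any union of level sets (indexed by `J ⊆ {0,…,n−1}`) is invariant, and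
(ii) the `𝔽₂`-rank of `A_D[L_j, L_{j+1}]` is invariant for every
`j ∈ {0,…,n−2}`. -/
theorem cutRank_invariant {V W : Type*} [Fintype V] [Fintype W] (n : ℕ)
    (hV : Fintype.card V = n) (hW : Fintype.card W = n)
    (R : V → V → Prop) (S : W → W → Prop)
    (hR : AcyclicRel R) (hS : AcyclicRel S) (h : BottEquivD R S) :
    (∀ J : Set ℕ, J ⊆ Set.Iio n →
      cutRank R (⋃ j ∈ J, levelSet R j) = cutRank S (⋃ j ∈ J, levelSet S j)) ∧
    (∀ j : ℕ, j + 1 < n →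
      subRank R (levelSet R j) (levelSet R (j + 1)) =
        subRank S (levelSet S j) (levelSet S (j + 1))) := by
  obtain ⟨R', hsteps, e, he⟩ := h
  obtain ⟨hR', hell, hcut, hlev⟩ := chain_invariant hR hsteps
  have hlvlR' : ∀ j, levelSet R' j = levelSet R j := by
    intro j
    rw [levelSet_eq, levelSet_eq]
    ext x
    rw [Set.mem_setOf_eq, Set.mem_setOf_eq, hell x]
  constructor
  · intro J _
    set X : Set V := ⋃ j ∈ J, levelSet R j with hXdef
    have hS_set : (⋃ j ∈ J, levelSet S j) = ⇑e '' X := by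
      rw [hXdef]
      simp only [Set.image_iUnion]
      exact Set.iUnion_congr fun j => Set.iUnion_congr fun _ => by
        rw [levelSet_iso e he j, hlvlR' j]
    rw [hS_set]
    rw [cutRank_eq]
    rw [cutRank_eq]
    have hcompl : (⇑e '' X)ᶜ = ⇑e '' Xᶜ := by
      rw [Set.image_compl_eq e.bijective]
    rw [hcompl]
    rw [subRank_iso e he]
    refine (hcut X ?_).symm
    intro a b ha hab
    simp only [hXdef, Set.mem_iUnion, levelSet_eq, Set.mem_setOf_eq] at ha ⊢
    obtain ⟨j, hj, hja⟩ := ha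
    exact ⟨j, hj, hab ▸ hja⟩
  · intro j _
    rw [levelSet_iso e he j]
    rw [levelSet_iso e he (j + 1)]
    rw [subRank_iso e he]
    rw [hlvlR' j]
    rw [hlvlR' (j + 1)]
    rw [levelSet_eq R j]
    rw [levelSet_eq R (j + 1)]
    exact (hlev j).symm
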